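/- Let V be an N × N real matrix all of whose entries satisfy: every row sum and every column sum equals μ > 0, and for every j, all partial sums Σ_{i=1}^s V(i,j) and Σ_{i=s}^N V(i,j) (s ∈ [N]) are nonnegative, and symmetrically for rows. Define Q on the grid {0, 1/N, ..., 1}^2 by Q(r/N, t/N) = (1/(Nμ)) Σ_{i≤r} Σ_{j≤t} V(i,j). Then Q is a discrete quasi-copula: Q(r/N, 1) = r/N, Q(1, t/N) = t/N, Q(0, ·) = Q(·, 0) = 0, Q is nondecreasing in each argument along the grid, and |Q(r/N, t/N) − Q(r'/N, t/N)| ≤ |r − r'|/N (and symmetrically), for all grid indices. -/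
import Mathlib

theorem aux_qc_main (N : ℕ) (hN : 0 < N) (μ : ℝ) (hμ : 0 < μ)
    (V Q : ℕ → ℕ → ℝ)
    (hrow : ∀ i ∈ Finset.Icc 1 N, ∑ j ∈ Finset.Icc 1 N, V i j = μ)
    (hrowpart : ∀ i ∈ Finset.Icc 1 N, ∀ s ∈ Finset.Icc 1 N,
      0 ≤ ∑ j ∈ Finset.Icc 1 s, V i j ∧ 0 ≤ ∑ j ∈ Finset.Icc s N, V i j)
    (hQ : ∀ r t : ℕ, r ≤ N → t ≤ N →
      Q r t = (∑ i ∈ Finset.Icc 1 r, ∑ j ∈ Finset.Icc 1 t, V i j) / ((N : ℝ) * μ)) :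
    (∀ r ≤ N, Q r N = (r : ℝ) / N) ∧
    (∀ t ≤ N, Q 0 t = 0) ∧
    (∀ r r' t : ℕ, r ≤ N → r' ≤ N → t ≤ N → r ≤ r' → Q r t ≤ Q r' t) ∧
    (∀ r r' t : ℕ, r ≤ N → r' ≤ N → t ≤ N →
      |Q r t - Q r' t| ≤ |(r : ℝ) - (r' : ℝ)| / N) := by
  have hNμ : (0:ℝ) < (N:ℝ) * μ := by positivity
  have hg0 : ∀ i ∈ Finset.Icc 1 N, ∀ t ≤ N, 0 ≤ ∑ j ∈ Finset.Icc 1 t, V i j := by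
    intro i hi t ht
    rcases Nat.eq_zero_or_pos t with h0 | h1
    · simp [h0]
    · exact (hrowpart i hi t (Finset.mem_Icc.mpr ⟨h1, ht⟩)).1
  have hgμ : ∀ i ∈ Finset.Icc 1 N, ∀ t ≤ N, ∑ j ∈ Finset.Icc 1 t, V i j ≤ μ := by
    intro i hi t ht
    have hsplit : (∑ j ∈ Finset.Icc 1 t, V i j) + ∑ j ∈ Finset.Icc (t+1) N, V i j
        = ∑ j ∈ Finset.Icc 1 N, V i j := by
      rw [show Finset.Icc (t+1) N = Finset.Ioc t N from Finset.Icc_add_one_left_eq_Ioc t N,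
        show Finset.Icc 1 t = Finset.Ioc 0 t from (Finset.Icc_add_one_left_eq_Ioc 0 t).symm,
        show Finset.Icc 1 N = Finset.Ioc 0 N from (Finset.Icc_add_one_left_eq_Ioc 0 N).symm]
      exact Finset.sum_Ioc_consecutive _ (Nat.zero_le t) ht
    have htail : 0 ≤ ∑ j ∈ Finset.Icc (t+1) N, V i j := by
      rcases eq_or_lt_of_le ht with h | h
      · rw [h, Finset.Icc_eq_empty (by omega)]; simp
      · exact (hrowpart i hi (t+1) (Finset.mem_Icc.mpr ⟨by omega, h⟩)).2
    have hr := hrow i hi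
    linarith
  have hmarg : ∀ r ≤ N, Q r N = (r : ℝ) / N := by
    intro r hr
    rw [hQ r N hr le_rfl]
    have hs : ∑ i ∈ Finset.Icc 1 r, ∑ j ∈ Finset.Icc 1 N, V i j = (r : ℝ) * μ := by
      rw [Finset.sum_congr rfl fun i hi => hrow i (Finset.Icc_subset_Icc_right hr hi),
        Finset.sum_const, Nat.card_Icc, nsmul_eq_mul]
      norm_num
    rw [hs, mul_div_mul_right _ _ hμ.ne']
  have hzero : ∀ t ≤ N, Q 0 t = 0 := by
    intro t ht
    rw [hQ 0 t (Nat.zero_le N) ht]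
    simp
  have hdiff : ∀ r r' t : ℕ, r ≤ r' → r' ≤ N → t ≤ N →
      Q r' t - Q r t = (∑ i ∈ Finset.Ioc r r', ∑ j ∈ Finset.Icc 1 t, V i j) / ((N:ℝ)*μ) := by
    intro r r' t hrr hr' ht
    rw [hQ r t (hrr.trans hr') ht, hQ r' t hr' ht, div_sub_div_same]
    congr 1
    have h := Finset.sum_Ioc_consecutive (fun i => ∑ j ∈ Finset.Icc 1 t, V i j)
      (Nat.zero_le r) hrr
    rw [show Finset.Icc 1 r' = Finset.Ioc 0 r' from (Finset.Icc_add_one_left_eq_Ioc 0 r').symm,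
       show Finset.Icc 1 r = Finset.Ioc 0 r from (Finset.Icc_add_one_left_eq_Ioc 0 r).symm]
    linarith
  have hmemIoc : ∀ r r' : ℕ, r' ≤ N → ∀ i ∈ Finset.Ioc r r', i ∈ Finset.Icc 1 N := by
    intro r r' hr' i hi
    rw [Finset.mem_Ioc] at hi
    exact Finset.mem_Icc.mpr ⟨by omega, by omega⟩
  have hmono : ∀ r r' t : ℕ, r ≤ N → r' ≤ N → t ≤ N → r ≤ r' → Q r t ≤ Q r' t := by
    intro r r' t hr hr' ht hrr
    have h := hdiff r r' t hrr hr' ht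
    have hpos : 0 ≤ ∑ i ∈ Finset.Ioc r r', ∑ j ∈ Finset.Icc 1 t, V i j :=
      Finset.sum_nonneg fun i hi => hg0 i (hmemIoc r r' hr' i hi) t ht
    have := div_nonneg hpos hNμ.le
    linarith
  have hlip : ∀ r r' t : ℕ, r ≤ r' → r' ≤ N → t ≤ N →
      Q r' t - Q r t ≤ ((r':ℝ) - (r:ℝ)) / N := by
    intro r r' t hrr hr' ht
    rw [hdiff r r' t hrr hr' ht]
    have hb : ∑ i ∈ Finset.Ioc r r', ∑ j ∈ Finset.Icc 1 t, V i j ≤ ((r' - r : ℕ) : ℝ) * μ := by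
      calc ∑ i ∈ Finset.Ioc r r', ∑ j ∈ Finset.Icc 1 t, V i j
          ≤ ∑ _i ∈ Finset.Ioc r r', μ :=
            Finset.sum_le_sum fun i hi => hgμ i (hmemIoc r r' hr' i hi) t ht
        _ = ((r' - r : ℕ) : ℝ) * μ := by
            rw [Finset.sum_const, Nat.card_Ioc, nsmul_eq_mul]
    have heq : ((r':ℝ) - (r:ℝ)) / N = (((r' - r : ℕ) : ℝ) * μ) / ((N:ℝ) * μ) := by
      rw [mul_div_mul_right _ _ hμ.ne']
      congr 1
      push_cast [hrr]
      ring
    rw [heq]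
    gcongr
  refine ⟨hmarg, hzero, hmono, ?_⟩
  intro r r' t hr hr' ht
  rcases le_total r r' with h | h
  · rw [abs_sub_comm, abs_of_nonneg (sub_nonneg.mpr (hmono r r' t hr hr' ht h)),
      abs_sub_comm, abs_of_nonneg (sub_nonneg.mpr (by exact_mod_cast h : (r:ℝ) ≤ r'))]
    exact hlip r r' t h hr' ht
  · rw [abs_of_nonneg (sub_nonneg.mpr (hmono r' r t hr' hr ht h)),
      abs_of_nonneg (sub_nonneg.mpr (by exact_mod_cast h : (r':ℝ) ≤ r))]
    exact hlip r' r t h hr ht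

/-- a doubly stochastic mass matrix (all row and column sums `μ > 0`)
whose partial sums from every boundary are nonnegative induces, via normalized
cumulative sums, a discrete quasi-copula on the grid `{0, 1/N, …, 1}²`. -/
theorem mass_matrix_gives_discrete_quasi_copula (N : ℕ) (hN : 0 < N)
    (μ : ℝ) (hμ : 0 < μ) (V : ℕ → ℕ → ℝ) (Q : ℕ → ℕ → ℝ)
    (hrow : ∀ i ∈ Finset.Icc 1 N, ∑ j ∈ Finset.Icc 1 N, V i j = μ)
    (hcol : ∀ j ∈ Finset.Icc 1 N, ∑ i ∈ Finset.Icc 1 N, V i j = μ)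
    (hcolpart : ∀ j ∈ Finset.Icc 1 N, ∀ s ∈ Finset.Icc 1 N,
      0 ≤ ∑ i ∈ Finset.Icc 1 s, V i j ∧ 0 ≤ ∑ i ∈ Finset.Icc s N, V i j)
    (hrowpart : ∀ i ∈ Finset.Icc 1 N, ∀ s ∈ Finset.Icc 1 N,
      0 ≤ ∑ j ∈ Finset.Icc 1 s, V i j ∧ 0 ≤ ∑ j ∈ Finset.Icc s N, V i j)
    (hQ : ∀ r t : ℕ, r ≤ N → t ≤ N →
      Q r t = (∑ i ∈ Finset.Icc 1 r, ∑ j ∈ Finset.Icc 1 t, V i j) / ((N : ℝ) * μ)) :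
    (∀ r ≤ N, Q r N = (r : ℝ) / N) ∧
    (∀ t ≤ N, Q N t = (t : ℝ) / N) ∧
    (∀ t ≤ N, Q 0 t = 0) ∧
    (∀ r ≤ N, Q r 0 = 0) ∧
    (∀ r r' t : ℕ, r ≤ N → r' ≤ N → t ≤ N → r ≤ r' → Q r t ≤ Q r' t) ∧
    (∀ t t' r : ℕ, t ≤ N → t' ≤ N → r ≤ N → t ≤ t' → Q r t ≤ Q r t') ∧
    (∀ r r' t : ℕ, r ≤ N → r' ≤ N → t ≤ N →
      |Q r t - Q r' t| ≤ |(r : ℝ) - (r' : ℝ)| / N) ∧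
    (∀ t t' r : ℕ, t ≤ N → t' ≤ N → r ≤ N →
      |Q r t - Q r t'| ≤ |(t : ℝ) - (t' : ℝ)| / N) := by
  obtain ⟨h1, h3, h5, h7⟩ := aux_qc_main N hN μ hμ V Q hrow hrowpart hQ
  have hQ' : ∀ r t : ℕ, r ≤ N → t ≤ N →
      (fun r t => Q t r) r t
        = (∑ i ∈ Finset.Icc 1 r, ∑ j ∈ Finset.Icc 1 t, (fun i j => V j i) i j) / ((N:ℝ)*μ) := by
    intro r t hr ht
    simp only
    rw [hQ t r ht hr, Finset.sum_comm]
  obtain ⟨h2, h4, h6, h8⟩ := aux_qc_main N hN μ hμ (fun i j => V j i) (fun r t => Q t r)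
    hcol hcolpart hQ'
  exact ⟨h1, fun t ht => h2 t ht, h3, fun r hr => h4 r hr, h5,
    fun t t' r ht ht' hr htt => h6 t t' r ht ht' hr htt, h7,
    fun t t' r ht ht' hr => h8 t t' r ht ht' hr⟩
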